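/- Let F : Ω → L(ℂⁿ, H) be holomorphic with h = F*F invertible and P = F h^{-1} F*. Then at every λ ∈ Ω, the squared Hilbert–Schmidt norm of ∂P(λ) equals −Tr(K_P(λ)), where K_P = −∂̄(h^{-1}∂h); that is, ‖∂P(λ)‖²_{HS} = −Tr K_P(λ). -/

import Mathlib

open Complex ContinuousLinearMap

/-- Wirtinger derivative ∂ = ∂/∂λ. -/
noncomputable def pd {E : Type*} [NormedAddCommGroup E] [NormedSpace ℂ E]
    (f : ℂ → E) : ℂ → E :=
  fun z => (2⁻¹ : ℂ) • (fderiv ℝ f z 1 - Complex.I • fderiv ℝ f z Complex.I)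

/-- Wirtinger derivative ∂̄ = ∂/∂λ̄. -/
noncomputable def pdbar {E : Type*} [NormedAddCommGroup E] [NormedSpace ℂ E]
    (f : ℂ → E) : ℂ → E :=
  fun z => (2⁻¹ : ℂ) • (fderiv ℝ f z 1 + Complex.I • fderiv ℝ f z Complex.I)

section Helpers

variable {E F G : Type*} [NormedAddCommGroup E] [NormedSpace ℂ E]
  [NormedAddCommGroup F] [NormedSpace ℂ F] [NormedAddCommGroup G] [NormedSpace ℂ G]

lemma pd_congr {f g : ℂ → E} {z : ℂ} (h : f =ᶠ[nhds z] g) : pd f z = pd g z := by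
  simp only [pd, h.fderiv_eq]

lemma pdbar_congr {f g : ℂ → E} {z : ℂ} (h : f =ᶠ[nhds z] g) : pdbar f z = pdbar g z := by
  simp only [pdbar, h.fderiv_eq]

lemma fderiv_real_one_I {f : ℂ → E} {z : ℂ} (h : DifferentiableAt ℂ f z) :
    fderiv ℝ f z 1 = fderiv ℂ f z 1 ∧
      fderiv ℝ f z Complex.I = Complex.I • fderiv ℂ f z 1 := by
  have hr : fderiv ℝ f z = (fderiv ℂ f z).restrictScalars ℝ :=
    (h.hasFDerivAt.restrictScalars ℝ).fderiv
  refine ⟨by rw [hr]; rfl, ?_⟩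
  rw [hr]
  show fderiv ℂ f z Complex.I = Complex.I • fderiv ℂ f z 1
  simpa using (fderiv ℂ f z).map_smul Complex.I (1 : ℂ)

lemma pd_holo {f : ℂ → E} {z : ℂ} (h : DifferentiableAt ℂ f z) :
    pd f z = fderiv ℂ f z 1 := by
  obtain ⟨h1, hI⟩ := fderiv_real_one_I h
  rw [pd, h1, hI, smul_smul, Complex.I_mul_I]
  module

lemma pdbar_holo {f : ℂ → E} {z : ℂ} (h : DifferentiableAt ℂ f z) :
    pdbar f z = 0 := by
  obtain ⟨h1, hI⟩ := fderiv_real_one_I h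
  rw [pdbar, h1, hI, smul_smul, Complex.I_mul_I]
  module

lemma isBoundedBilinearMap_comp_real :
    IsBoundedBilinearMap ℝ (fun p : (F →L[ℂ] G) × (E →L[ℂ] F) => p.1 ∘L p.2) where
  add_left x₁ x₂ y := by ext v; simp
  smul_left c x y := by ext v; simp
  add_right x y₁ y₂ := by ext v; simp
  smul_right c x y := by ext v; simp
  bound := ⟨1, one_pos, fun x y => by simpa using opNorm_comp_le x y⟩

lemma hasFDerivAt_clm_comp' {f : ℂ → F →L[ℂ] G} {g : ℂ → E →L[ℂ] F} {z : ℂ}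
    {f' : ℂ →L[ℝ] F →L[ℂ] G} {g' : ℂ →L[ℝ] E →L[ℂ] F}
    (hf : HasFDerivAt f f' z) (hg : HasFDerivAt g g' z) :
    HasFDerivAt (fun w => f w ∘L g w)
      ((isBoundedBilinearMap_comp_real (E := E) (F := F) (G := G)).deriv (f z, g z)
        ∘L (f'.prod g')) z :=
  by
    have h1 := (isBoundedBilinearMap_comp_real (E := E) (F := F) (G := G)).hasFDerivAt (f z, g z)
    exact HasFDerivAt.comp (g := fun p : (F →L[ℂ] G) × (E →L[ℂ] F) => p.1 ∘L p.2) z h1 (hf.prodMk hg)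

lemma differentiableAt_clm_comp' {f : ℂ → F →L[ℂ] G} {g : ℂ → E →L[ℂ] F} {z : ℂ}
    (hf : DifferentiableAt ℝ f z) (hg : DifferentiableAt ℝ g z) :
    DifferentiableAt ℝ (fun w => f w ∘L g w) z :=
  (hasFDerivAt_clm_comp' hf.hasFDerivAt hg.hasFDerivAt).differentiableAt

lemma fderiv_clm_comp' {f : ℂ → F →L[ℂ] G} {g : ℂ → E →L[ℂ] F} {z : ℂ}
    (hf : DifferentiableAt ℝ f z) (hg : DifferentiableAt ℝ g z) (c : ℂ) :
    fderiv ℝ (fun w => f w ∘L g w) z c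
      = fderiv ℝ f z c ∘L g z + f z ∘L fderiv ℝ g z c := by
  rw [(hasFDerivAt_clm_comp' hf.hasFDerivAt hg.hasFDerivAt).fderiv]
  simp only [coe_comp', Function.comp_apply, prod_apply, IsBoundedBilinearMap.deriv_apply]
  exact add_comm _ _

lemma pd_clm_comp {f : ℂ → F →L[ℂ] G} {g : ℂ → E →L[ℂ] F} {z : ℂ}
    (hf : DifferentiableAt ℝ f z) (hg : DifferentiableAt ℝ g z) :
    pd (fun w => f w ∘L g w) z = pd f z ∘L g z + f z ∘L pd g z := by
  simp only [pd, fderiv_clm_comp' hf hg]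
  rw [smul_comp, comp_smul, sub_comp, comp_sub, smul_comp, comp_smul]
  module

lemma pdbar_clm_comp {f : ℂ → F →L[ℂ] G} {g : ℂ → E →L[ℂ] F} {z : ℂ}
    (hf : DifferentiableAt ℝ f z) (hg : DifferentiableAt ℝ g z) :
    pdbar (fun w => f w ∘L g w) z = pdbar f z ∘L g z + f z ∘L pdbar g z := by
  simp only [pdbar, fderiv_clm_comp' hf hg]
  rw [smul_comp, comp_smul, add_comp, comp_add, smul_comp, comp_smul]
  module

end Helpers

section Adj

variable {E F : Type*} [NormedAddCommGroup E] [InnerProductSpace ℂ E] [CompleteSpace E]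
  [NormedAddCommGroup F] [InnerProductSpace ℂ F] [CompleteSpace F]

/-- The adjoint as a real-linear continuous map. -/
noncomputable def adjR (E F : Type*) [NormedAddCommGroup E] [InnerProductSpace ℂ E]
    [CompleteSpace E] [NormedAddCommGroup F] [InnerProductSpace ℂ F] [CompleteSpace F] :
    (E →L[ℂ] F) →L[ℝ] (F →L[ℂ] E) where
  toFun A := adjoint A
  map_add' x y := map_add _ x y
  map_smul' r x := by
    show adjoint (r • x) = r • adjoint x
    have h1 : (r • x : E →L[ℂ] F) = ((r : ℂ) • x) := rfl
    rw [h1, map_smulₛₗ _ ((r : ℂ)) x, Complex.conj_ofReal]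
    rfl
  cont := (ContinuousLinearMap.adjoint (𝕜 := ℂ) (E := E) (F := F)).continuous

@[simp] lemma adjR_apply (A : E →L[ℂ] F) : adjR E F A = adjoint A := rfl

lemma fderiv_adjoint' {f : ℂ → E →L[ℂ] F} {z : ℂ} (hf : DifferentiableAt ℝ f z) (c : ℂ) :
    fderiv ℝ (fun w => adjoint (f w)) z c = adjoint (fderiv ℝ f z c) := by
  have h1 : HasFDerivAt (fun w => adjR E F (f w)) ((adjR E F).comp (fderiv ℝ f z)) z :=
    (adjR E F).hasFDerivAt.comp z hf.hasFDerivAt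
  have h2 : fderiv ℝ (fun w => adjoint (f w)) z = (adjR E F).comp (fderiv ℝ f z) := h1.fderiv
  rw [h2]; rfl

lemma adjoint_smul (c : ℂ) (A : E →L[ℂ] F) :
    adjoint (c • A) = (starRingEnd ℂ) c • adjoint A := map_smulₛₗ _ c A

lemma differentiableAt_adjoint' {f : ℂ → E →L[ℂ] F} {z : ℂ} (hf : DifferentiableAt ℝ f z) :
    DifferentiableAt ℝ (fun w => adjoint (f w)) z :=
  ((adjR E F).hasFDerivAt.comp z hf.hasFDerivAt).differentiableAt

lemma conj_two_inv : (starRingEnd ℂ) 2⁻¹ = 2⁻¹ := by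
  rw [map_inv₀, map_ofNat]

lemma pdbar_adjoint {f : ℂ → E →L[ℂ] F} {z : ℂ} (hf : DifferentiableAt ℝ f z) :
    pdbar (fun w => adjoint (f w)) z = adjoint (pd f z) := by
  simp only [pdbar, pd, fderiv_adjoint' hf]
  rw [map_smulₛₗ, map_sub, adjoint_smul, Complex.conj_I, conj_two_inv]
  module

lemma pd_adjoint {f : ℂ → E →L[ℂ] F} {z : ℂ} (hf : DifferentiableAt ℝ f z) :
    pd (fun w => adjoint (f w)) z = adjoint (pdbar f z) := by
  simp only [pdbar, pd, fderiv_adjoint' hf]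
  rw [map_smulₛₗ, map_add, adjoint_smul, Complex.conj_I, conj_two_inv]
  module

end Adj

section Inv

variable {E : Type*} [NormedAddCommGroup E] [InnerProductSpace ℂ E] [CompleteSpace E]

lemma fderiv_ringInverse' {f : ℂ → E →L[ℂ] E} {z : ℂ}
    (hf : DifferentiableAt ℝ f z) (hu : IsUnit (f z)) (c : ℂ) :
    fderiv ℝ (fun w => Ring.inverse (f w)) z c
      = -(Ring.inverse (f z) * fderiv ℝ f z c * Ring.inverse (f z)) := by
  have h0 : HasFDerivAt (Ring.inverse : (E →L[ℂ] E) → (E →L[ℂ] E))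
      (-mulLeftRight ℝ _ ↑hu.unit⁻¹ ↑hu.unit⁻¹) (f z) := by
    have h3 := hasFDerivAt_ringInverse (𝕜 := ℝ) hu.unit
    rw [IsUnit.unit_spec] at h3
    exact h3
  have h2 := (h0.comp z hf.hasFDerivAt).fderiv
  have hrs : (↑hu.unit⁻¹ : E →L[ℂ] E) = Ring.inverse (f z) := by
    rw [← Ring.inverse_unit hu.unit, IsUnit.unit_spec]
  rw [show (fun w => Ring.inverse (f w)) = Ring.inverse ∘ f from rfl, h2]
  simp [mulLeftRight_apply, hrs]

lemma differentiableAt_ringInverse' {f : ℂ → E →L[ℂ] E} {z : ℂ}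
    (hf : DifferentiableAt ℝ f z) (hu : IsUnit (f z)) :
    DifferentiableAt ℝ (fun w => Ring.inverse (f w)) z :=
  (differentiableAt_inverse (𝕜 := ℝ) hu).comp z hf

lemma pd_ringInverse {f : ℂ → E →L[ℂ] E} {z : ℂ}
    (hf : DifferentiableAt ℝ f z) (hu : IsUnit (f z)) :
    pd (fun w => Ring.inverse (f w)) z
      = -(Ring.inverse (f z) * pd f z * Ring.inverse (f z)) := by
  simp only [pd, fderiv_ringInverse' hf hu]
  simp only [mul_smul_comm, smul_mul_assoc, mul_sub, sub_mul]
  module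

lemma pdbar_ringInverse {f : ℂ → E →L[ℂ] E} {z : ℂ}
    (hf : DifferentiableAt ℝ f z) (hu : IsUnit (f z)) :
    pdbar (fun w => Ring.inverse (f w)) z
      = -(Ring.inverse (f z) * pdbar f z * Ring.inverse (f z)) := by
  simp only [pdbar, fderiv_ringInverse' hf hu]
  simp only [mul_smul_comm, smul_mul_assoc, mul_add, add_mul]
  module

end Inv

section TraceHelp

local notation "⟪" x ", " y "⟫" => @inner ℂ _ _ x y

lemma trace_eq_sum_basis {n : ℕ} (W : EuclideanSpace ℂ (Fin n) →L[ℂ] EuclideanSpace ℂ (Fin n)) :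
    LinearMap.trace ℂ (EuclideanSpace ℂ (Fin n)) (W : _ →ₗ[ℂ] _)
      = ∑ k, W ((EuclideanSpace.basisFun (Fin n) ℂ) k) k := by
  rw [LinearMap.trace_eq_matrix_trace ℂ (EuclideanSpace.basisFun (Fin n) ℂ).toBasis]
  rw [Matrix.trace]
  simp [LinearMap.toMatrix_apply, Matrix.diag]

lemma inner_basisFun_left {n : ℕ} (x : EuclideanSpace ℂ (Fin n)) (k : Fin n) :
    ⟪(EuclideanSpace.basisFun (Fin n) ℂ) k, x⟫ = x k := by
  rw [EuclideanSpace.basisFun_apply, EuclideanSpace.inner_single_left]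
  simp

end TraceHelp

section Main

local notation "⟪" x ", " y "⟫" => @inner ℂ _ _ x y

set_option maxHeartbeats 4000000 in
theorem stmt17 {n : ℕ}
    {H : Type*} [NormedAddCommGroup H] [InnerProductSpace ℂ H] [CompleteSpace H]
    (Ω : Set ℂ) (hΩ : IsOpen Ω)
    (F : ℂ → EuclideanSpace ℂ (Fin n) →L[ℂ] H)
    (hF : DifferentiableOn ℂ F Ω)
    (h : ℂ → EuclideanSpace ℂ (Fin n) →L[ℂ] EuclideanSpace ℂ (Fin n))
    (hdef : ∀ z ∈ Ω, h z = ContinuousLinearMap.adjoint (F z) ∘L F z)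
    (hinv : ∀ z ∈ Ω, IsUnit (h z))
    (hi : ℂ → EuclideanSpace ℂ (Fin n) →L[ℂ] EuclideanSpace ℂ (Fin n))
    (hhi : ∀ z ∈ Ω, hi z = Ring.inverse (h z))
    (P : ℂ → H →L[ℂ] H)
    (hP : ∀ z ∈ Ω, P z = F z ∘L hi z ∘L ContinuousLinearMap.adjoint (F z))
    (KP : ℂ → EuclideanSpace ℂ (Fin n) →L[ℂ] EuclideanSpace ℂ (Fin n))
    (hKP : ∀ z ∈ Ω, KP z = -(pdbar (fun w => hi w * pd h w) z))
    {ι : Type*} (σ : HilbertBasis ι ℂ H) :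
    ∀ z ∈ Ω,
      ((∑' i : ι, ‖pd P z (σ i)‖ ^ 2 : ℝ) : ℂ) =
        -(LinearMap.trace ℂ (EuclideanSpace ℂ (Fin n)) (KP z : _ →ₗ[ℂ] _)) := by
  intro z hz
  have hΩz : Ω ∈ nhds z := hΩ.mem_nhds hz
  -- differentiability facts
  have dF : ∀ w ∈ Ω, DifferentiableAt ℂ F w := fun w hw => hF.differentiableAt (hΩ.mem_nhds hw)
  have dFR : ∀ w ∈ Ω, DifferentiableAt ℝ F w := fun w hw => (dF w hw).restrictScalars ℝ
  have hFa : AnalyticOnNhd ℂ F Ω := hF.analyticOnNhd hΩ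
  have dFdC : DifferentiableAt ℂ (fun w => fderiv ℂ F w 1) z := by
    have h1 : DifferentiableAt ℂ (fderiv ℂ F) z := (hFa.fderiv z hz).differentiableAt
    exact h1.clm_apply (differentiableAt_const _)
  have dFdR : DifferentiableAt ℝ (fun w => fderiv ℂ F w 1) z := dFdC.restrictScalars ℝ
  have dAdjF : ∀ w ∈ Ω, DifferentiableAt ℝ (fun v => ContinuousLinearMap.adjoint (F v)) w :=
    fun w hw => differentiableAt_adjoint' (dFR w hw)
  have dhh : ∀ w ∈ Ω,
      DifferentiableAt ℝ (fun v => ContinuousLinearMap.adjoint (F v) ∘L F v) w :=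
    fun w hw => differentiableAt_clm_comp' (dAdjF w hw) (dFR w hw)
  have hhU : IsUnit (ContinuousLinearMap.adjoint (F z) ∘L F z) := by
    rw [← hdef z hz]; exact hinv z hz
  set A : EuclideanSpace ℂ (Fin n) →L[ℂ] H := fderiv ℂ F z 1 with hA
  have pdFz : pd F z = A := pd_holo (dF z hz)
  -- ∂h = F* ∘ F' on Ω
  have pdh : ∀ w ∈ Ω, pd h w = ContinuousLinearMap.adjoint (F w) ∘L fderiv ℂ F w 1 := by
    intro w hw
    have e : h =ᶠ[nhds w] (fun v => ContinuousLinearMap.adjoint (F v) ∘L F v) :=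
      Filter.eventuallyEq_of_mem (hΩ.mem_nhds hw) (fun v hv => hdef v hv)
    have e1 : pd h w = pd (fun v => ContinuousLinearMap.adjoint (F v) ∘L F v) w := pd_congr e
    have e2 : pd (fun v => ContinuousLinearMap.adjoint (F v) ∘L F v) w
        = pd (fun v => ContinuousLinearMap.adjoint (F v)) w ∘L F w
          + ContinuousLinearMap.adjoint (F w) ∘L pd F w :=
      pd_clm_comp (dAdjF w hw) (dFR w hw)
    have e3 : pd (fun v => ContinuousLinearMap.adjoint (F v)) w
        = ContinuousLinearMap.adjoint (pdbar F w) := pd_adjoint (dFR w hw)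
    rw [e1, e2, e3, pdbar_holo (dF w hw), pd_holo (dF w hw), map_zero,
      ContinuousLinearMap.zero_comp, zero_add]
  -- the inverse function
  have hInvEq : Ring.inverse (ContinuousLinearMap.adjoint (F z) ∘L F z) = hi z := by
    rw [← hdef z hz]; exact (hhi z hz).symm
  have dInv : DifferentiableAt ℝ
      (fun w => Ring.inverse (ContinuousLinearMap.adjoint (F w) ∘L F w)) z :=
    differentiableAt_ringInverse' (dhh z hz) hhU
  -- algebraic facts at z
  have k1 : ∀ u, ContinuousLinearMap.adjoint (F z) (F z u) = h z u := by
    intro u; rw [hdef z hz]; rfl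
  have emul1 : hi z * h z = 1 := by
    rw [hhi z hz]; exact Ring.inverse_mul_cancel _ (hinv z hz)
  have emul2 : h z * hi z = 1 := by
    rw [hhi z hz]; exact Ring.mul_inverse_cancel _ (hinv z hz)
  have k2 : ∀ y, hi z (h z y) = y := by
    intro y
    have := congrArg (fun T : EuclideanSpace ℂ (Fin n) →L[ℂ] EuclideanSpace ℂ (Fin n) => T y) emul1
    simpa [ContinuousLinearMap.mul_apply] using this
  have kP : ∀ x, P z (P z x) = P z x := by
    intro x
    rw [hP z hz]
    simp only [ContinuousLinearMap.coe_comp', Function.comp_apply]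
    rw [k1, k2]
  have hadj : ContinuousLinearMap.adjoint (h z) = h z := by
    rw [hdef z hz, ContinuousLinearMap.adjoint_comp, ContinuousLinearMap.adjoint_adjoint]
  have adj_one : ContinuousLinearMap.adjoint
      (1 : EuclideanSpace ℂ (Fin n) →L[ℂ] EuclideanSpace ℂ (Fin n)) = 1 := by
    rw [ContinuousLinearMap.one_def, ContinuousLinearMap.adjoint_id]
  have adjoint_mul : ∀ (a b : EuclideanSpace ℂ (Fin n) →L[ℂ] EuclideanSpace ℂ (Fin n)),
      ContinuousLinearMap.adjoint (a * b)
        = ContinuousLinearMap.adjoint b * ContinuousLinearMap.adjoint a := by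
    intro a b
    exact ContinuousLinearMap.adjoint_comp a b
  have hiadj : ContinuousLinearMap.adjoint (hi z) = hi z := by
    calc ContinuousLinearMap.adjoint (hi z)
        = ContinuousLinearMap.adjoint (hi z) * (h z * hi z) := by rw [emul2, mul_one]
      _ = (ContinuousLinearMap.adjoint (hi z) * ContinuousLinearMap.adjoint (h z)) * hi z := by
          rw [hadj, mul_assoc]
      _ = ContinuousLinearMap.adjoint (h z * hi z) * hi z := by rw [adjoint_mul]
      _ = hi z := by rw [emul2, adj_one, one_mul]
  have Padj : ContinuousLinearMap.adjoint (P z) = P z := by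
    rw [hP z hz, ContinuousLinearMap.adjoint_comp, ContinuousLinearMap.adjoint_comp,
      ContinuousLinearMap.adjoint_adjoint, hiadj, ContinuousLinearMap.comp_assoc]
  -- the key operators
  set g : EuclideanSpace ℂ (Fin n) →L[ℂ] H := A ∘L hi z - P z ∘L (A ∘L hi z) with hg
  set X : EuclideanSpace ℂ (Fin n) →L[ℂ] EuclideanSpace ℂ (Fin n) :=
    hi z ∘L (ContinuousLinearMap.adjoint A ∘L (A - P z ∘L A)) with hX
  set m : EuclideanSpace ℂ (Fin n) →L[ℂ] EuclideanSpace ℂ (Fin n) :=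
    ContinuousLinearMap.adjoint g ∘L g with hm
  -- ∂P = g ∘ F*
  have dInner : DifferentiableAt ℝ
      (fun w => Ring.inverse (ContinuousLinearMap.adjoint (F w) ∘L F w)
        ∘L ContinuousLinearMap.adjoint (F w)) z :=
    differentiableAt_clm_comp' dInv (dAdjF z hz)
  have e6 : pd (fun w => ContinuousLinearMap.adjoint (F w)) z = 0 := by
    rw [pd_adjoint (dFR z hz), pdbar_holo (dF z hz), map_zero]
  have e6b : pdbar (fun w => ContinuousLinearMap.adjoint (F w)) z
      = ContinuousLinearMap.adjoint A := by
    rw [pdbar_adjoint (dFR z hz), pdFz]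
  have e5 : pd (fun v => ContinuousLinearMap.adjoint (F v) ∘L F v) z
      = ContinuousLinearMap.adjoint (F z) ∘L A := by
    have a1 : pd (fun v => ContinuousLinearMap.adjoint (F v) ∘L F v) z
        = pd (fun v => ContinuousLinearMap.adjoint (F v)) z ∘L F z
          + ContinuousLinearMap.adjoint (F z) ∘L pd F z :=
      pd_clm_comp (dAdjF z hz) (dFR z hz)
    rw [a1, e6, ContinuousLinearMap.zero_comp, zero_add, pdFz]
  have pdPT : pd P z = g ∘L ContinuousLinearMap.adjoint (F z) := by
    have hPf : P =ᶠ[nhds z] (fun w => F w ∘L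
        (Ring.inverse (ContinuousLinearMap.adjoint (F w) ∘L F w)
          ∘L ContinuousLinearMap.adjoint (F w))) :=
      Filter.eventuallyEq_of_mem hΩz (fun w hw => by
        rw [hP w hw, hhi w hw, hdef w hw])
    have c2 : pd (fun w => F w ∘L
        (Ring.inverse (ContinuousLinearMap.adjoint (F w) ∘L F w)
          ∘L ContinuousLinearMap.adjoint (F w))) z
        = pd F z ∘L (Ring.inverse (ContinuousLinearMap.adjoint (F z) ∘L F z)
            ∘L ContinuousLinearMap.adjoint (F z))
          + F z ∘L pd (fun w => Ring.inverse (ContinuousLinearMap.adjoint (F w) ∘L F w)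
              ∘L ContinuousLinearMap.adjoint (F w)) z :=
      pd_clm_comp (dFR z hz) dInner
    have c3 : pd (fun w => Ring.inverse (ContinuousLinearMap.adjoint (F w) ∘L F w)
          ∘L ContinuousLinearMap.adjoint (F w)) z
        = pd (fun w => Ring.inverse (ContinuousLinearMap.adjoint (F w) ∘L F w)) z
            ∘L ContinuousLinearMap.adjoint (F z)
          + Ring.inverse (ContinuousLinearMap.adjoint (F z) ∘L F z)
            ∘L pd (fun w => ContinuousLinearMap.adjoint (F w)) z :=
      pd_clm_comp dInv (dAdjF z hz)
    have c4 : pd (fun w => Ring.inverse (ContinuousLinearMap.adjoint (F w) ∘L F w)) z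
        = -(Ring.inverse (ContinuousLinearMap.adjoint (F z) ∘L F z)
            * pd (fun v => ContinuousLinearMap.adjoint (F v) ∘L F v) z
            * Ring.inverse (ContinuousLinearMap.adjoint (F z) ∘L F z)) :=
      pd_ringInverse (dhh z hz) hhU
    rw [pd_congr hPf, c2, c3, c4, e5, e6, hInvEq, pdFz, hg, hP z hz]
    simp only [ContinuousLinearMap.mul_def, ContinuousLinearMap.comp_zero, add_zero,
      ContinuousLinearMap.neg_comp, ContinuousLinearMap.comp_neg,
      ContinuousLinearMap.sub_comp, ContinuousLinearMap.comp_sub,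
      ContinuousLinearMap.comp_assoc]
    abel
  -- KP = -X
  have KPz : KP z = -X := by
    have hqf : (fun w => hi w * pd h w) =ᶠ[nhds z] (fun w =>
        Ring.inverse (ContinuousLinearMap.adjoint (F w) ∘L F w)
          ∘L (ContinuousLinearMap.adjoint (F w) ∘L fderiv ℂ F w 1)) :=
      Filter.eventuallyEq_of_mem hΩz (fun w hw => by
        show hi w * pd h w = _
        rw [pdh w hw, hhi w hw, hdef w hw, ContinuousLinearMap.mul_def])
    have dV : DifferentiableAt ℝ
        (fun w => ContinuousLinearMap.adjoint (F w) ∘L fderiv ℂ F w 1) z :=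
      differentiableAt_clm_comp' (dAdjF z hz) dFdR
    have b2 : pdbar (fun w =>
        Ring.inverse (ContinuousLinearMap.adjoint (F w) ∘L F w)
          ∘L (ContinuousLinearMap.adjoint (F w) ∘L fderiv ℂ F w 1)) z
        = pdbar (fun w => Ring.inverse (ContinuousLinearMap.adjoint (F w) ∘L F w)) z
            ∘L (ContinuousLinearMap.adjoint (F z) ∘L A)
          + Ring.inverse (ContinuousLinearMap.adjoint (F z) ∘L F z)
            ∘L pdbar (fun w => ContinuousLinearMap.adjoint (F w) ∘L fderiv ℂ F w 1) z :=
      pdbar_clm_comp dInv dV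
    have b3 : pdbar (fun w => Ring.inverse (ContinuousLinearMap.adjoint (F w) ∘L F w)) z
        = -(Ring.inverse (ContinuousLinearMap.adjoint (F z) ∘L F z)
            * pdbar (fun v => ContinuousLinearMap.adjoint (F v) ∘L F v) z
            * Ring.inverse (ContinuousLinearMap.adjoint (F z) ∘L F z)) :=
      pdbar_ringInverse (dhh z hz) hhU
    have b4 : pdbar (fun v => ContinuousLinearMap.adjoint (F v) ∘L F v) z
        = ContinuousLinearMap.adjoint A ∘L F z := by
      have a1 : pdbar (fun v => ContinuousLinearMap.adjoint (F v) ∘L F v) z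
          = pdbar (fun v => ContinuousLinearMap.adjoint (F v)) z ∘L F z
            + ContinuousLinearMap.adjoint (F z) ∘L pdbar F z :=
        pdbar_clm_comp (dAdjF z hz) (dFR z hz)
      rw [a1, e6b, pdbar_holo (dF z hz), ContinuousLinearMap.comp_zero, add_zero]
    have b5 : pdbar (fun w => ContinuousLinearMap.adjoint (F w) ∘L fderiv ℂ F w 1) z
        = ContinuousLinearMap.adjoint A ∘L A := by
      have a1 : pdbar (fun w => ContinuousLinearMap.adjoint (F w) ∘L fderiv ℂ F w 1) z
          = pdbar (fun w => ContinuousLinearMap.adjoint (F w)) z ∘L A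
            + ContinuousLinearMap.adjoint (F z) ∘L pdbar (fun w => fderiv ℂ F w 1) z :=
        pdbar_clm_comp (dAdjF z hz) dFdR
      rw [a1, e6b, pdbar_holo dFdC, ContinuousLinearMap.comp_zero, add_zero]
    rw [hKP z hz, pdbar_congr hqf, b2, b3, b4, b5, hInvEq, hX, hP z hz]
    simp only [ContinuousLinearMap.mul_def, ContinuousLinearMap.neg_comp,
      ContinuousLinearMap.comp_neg, ContinuousLinearMap.sub_comp,
      ContinuousLinearMap.comp_sub, ContinuousLinearMap.comp_assoc]
    abel
  have gadj : ContinuousLinearMap.adjoint g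
      = hi z ∘L ContinuousLinearMap.adjoint A
        - (hi z ∘L ContinuousLinearMap.adjoint A) ∘L P z := by
    rw [hg, map_sub, ContinuousLinearMap.adjoint_comp, ContinuousLinearMap.adjoint_comp,
      ContinuousLinearMap.adjoint_comp, hiadj, Padj]
  have mh : ∀ y, m (h z y) = X y := by
    intro y
    have hgv : g (h z y) = A y - P z (A y) := by
      rw [hg]
      simp only [ContinuousLinearMap.sub_apply, ContinuousLinearMap.coe_comp',
        Function.comp_apply, k2]
    have hmy : m (h z y) = ContinuousLinearMap.adjoint g (g (h z y)) := by rw [hm]; rfl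
    rw [hmy, hgv, gadj, hX]
    simp only [ContinuousLinearMap.sub_apply, ContinuousLinearMap.coe_comp',
      Function.comp_apply, map_sub, kP, sub_self, map_zero, sub_zero]
  -- the analytic computation
  have key1 : ∀ i : ι, ((‖pd P z (σ i)‖ ^ 2 : ℝ) : ℂ)
      = ∑ k, ⟪F z (ContinuousLinearMap.adjoint m ((EuclideanSpace.basisFun (Fin n) ℂ) k)), σ i⟫
          * ⟪σ i, F z ((EuclideanSpace.basisFun (Fin n) ℂ) k)⟫ := by
    intro i
    have e0 : pd P z (σ i) = g (ContinuousLinearMap.adjoint (F z) (σ i)) := by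
      rw [pdPT]; rfl
    have e1 : ((‖g (ContinuousLinearMap.adjoint (F z) (σ i))‖ ^ 2 : ℝ) : ℂ)
        = ⟪g (ContinuousLinearMap.adjoint (F z) (σ i)),
            g (ContinuousLinearMap.adjoint (F z) (σ i))⟫ := by
      rw [inner_self_eq_norm_sq_to_K]; norm_cast
    have e2 : ⟪g (ContinuousLinearMap.adjoint (F z) (σ i)),
          g (ContinuousLinearMap.adjoint (F z) (σ i))⟫
        = ⟪ContinuousLinearMap.adjoint (F z) (σ i),
            m (ContinuousLinearMap.adjoint (F z) (σ i))⟫ := by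
      have hmy : m (ContinuousLinearMap.adjoint (F z) (σ i))
          = ContinuousLinearMap.adjoint g (g (ContinuousLinearMap.adjoint (F z) (σ i))) := by
        rw [hm]; rfl
      rw [hmy, ContinuousLinearMap.adjoint_inner_right]
    rw [e0, e1, e2,
      ← OrthonormalBasis.sum_inner_mul_inner (EuclideanSpace.basisFun (Fin n) ℂ)
        (ContinuousLinearMap.adjoint (F z) (σ i))
        (m (ContinuousLinearMap.adjoint (F z) (σ i)))]
    refine Finset.sum_congr rfl fun k _ => ?_
    have t1 : ⟪ContinuousLinearMap.adjoint (F z) (σ i),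
          (EuclideanSpace.basisFun (Fin n) ℂ) k⟫
        = ⟪σ i, F z ((EuclideanSpace.basisFun (Fin n) ℂ) k)⟫ :=
      ContinuousLinearMap.adjoint_inner_left (F z) ((EuclideanSpace.basisFun (Fin n) ℂ) k) (σ i)
    have t2 : ⟪(EuclideanSpace.basisFun (Fin n) ℂ) k,
          m (ContinuousLinearMap.adjoint (F z) (σ i))⟫
        = ⟪F z (ContinuousLinearMap.adjoint m ((EuclideanSpace.basisFun (Fin n) ℂ) k)), σ i⟫ := by
      calc ⟪(EuclideanSpace.basisFun (Fin n) ℂ) k,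
            m (ContinuousLinearMap.adjoint (F z) (σ i))⟫
          = ⟪ContinuousLinearMap.adjoint m ((EuclideanSpace.basisFun (Fin n) ℂ) k),
              ContinuousLinearMap.adjoint (F z) (σ i)⟫ :=
            (ContinuousLinearMap.adjoint_inner_left m
              (ContinuousLinearMap.adjoint (F z) (σ i))
              ((EuclideanSpace.basisFun (Fin n) ℂ) k)).symm
        _ = ⟪F z (ContinuousLinearMap.adjoint m ((EuclideanSpace.basisFun (Fin n) ℂ) k)), σ i⟫ :=
            ContinuousLinearMap.adjoint_inner_right (F z)
              (ContinuousLinearMap.adjoint m ((EuclideanSpace.basisFun (Fin n) ℂ) k)) (σ i)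
    rw [t1, t2, mul_comm]
  have S1 : ∀ k : Fin n, Summable (fun i : ι =>
      ⟪F z (ContinuousLinearMap.adjoint m ((EuclideanSpace.basisFun (Fin n) ℂ) k)), σ i⟫
        * ⟪σ i, F z ((EuclideanSpace.basisFun (Fin n) ℂ) k)⟫) :=
    fun k => σ.summable_inner_mul_inner _ _
  have S2 : Summable (fun i : ι => ∑ k,
      ⟪F z (ContinuousLinearMap.adjoint m ((EuclideanSpace.basisFun (Fin n) ℂ) k)), σ i⟫
        * ⟪σ i, F z ((EuclideanSpace.basisFun (Fin n) ℂ) k)⟫) :=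
    summable_sum (fun k _ => S1 k)
  have SR : Summable (fun i : ι => ‖pd P z (σ i)‖ ^ 2) := by
    have he : (fun i : ι => ‖pd P z (σ i)‖ ^ 2) = fun i => (∑ k,
        ⟪F z (ContinuousLinearMap.adjoint m ((EuclideanSpace.basisFun (Fin n) ℂ) k)), σ i⟫
          * ⟪σ i, F z ((EuclideanSpace.basisFun (Fin n) ℂ) k)⟫).re := by
      funext i; rw [← key1 i, Complex.ofReal_re]
    rw [he]; exact S2.mapL Complex.reCLM
  have step : ∀ k : Fin n,
      ⟪F z (ContinuousLinearMap.adjoint m ((EuclideanSpace.basisFun (Fin n) ℂ) k)),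
        F z ((EuclideanSpace.basisFun (Fin n) ℂ) k)⟫
      = (X ((EuclideanSpace.basisFun (Fin n) ℂ) k)) k := by
    intro k
    calc ⟪F z (ContinuousLinearMap.adjoint m ((EuclideanSpace.basisFun (Fin n) ℂ) k)),
          F z ((EuclideanSpace.basisFun (Fin n) ℂ) k)⟫
        = ⟪ContinuousLinearMap.adjoint m ((EuclideanSpace.basisFun (Fin n) ℂ) k),
            ContinuousLinearMap.adjoint (F z) (F z ((EuclideanSpace.basisFun (Fin n) ℂ) k))⟫ :=
          (ContinuousLinearMap.adjoint_inner_right (F z)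
            (ContinuousLinearMap.adjoint m ((EuclideanSpace.basisFun (Fin n) ℂ) k))
            (F z ((EuclideanSpace.basisFun (Fin n) ℂ) k))).symm
      _ = ⟪ContinuousLinearMap.adjoint m ((EuclideanSpace.basisFun (Fin n) ℂ) k),
            h z ((EuclideanSpace.basisFun (Fin n) ℂ) k)⟫ := by rw [k1]
      _ = ⟪(EuclideanSpace.basisFun (Fin n) ℂ) k,
            m (h z ((EuclideanSpace.basisFun (Fin n) ℂ) k))⟫ :=
          ContinuousLinearMap.adjoint_inner_left m
            (h z ((EuclideanSpace.basisFun (Fin n) ℂ) k))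
            ((EuclideanSpace.basisFun (Fin n) ℂ) k)
      _ = ⟪(EuclideanSpace.basisFun (Fin n) ℂ) k,
            X ((EuclideanSpace.basisFun (Fin n) ℂ) k)⟫ := by rw [mh]
      _ = (X ((EuclideanSpace.basisFun (Fin n) ℂ) k)) k :=
          inner_basisFun_left _ k
  have tneg : LinearMap.trace ℂ (EuclideanSpace ℂ (Fin n))
      ((-X : EuclideanSpace ℂ (Fin n) →L[ℂ] EuclideanSpace ℂ (Fin n)) : _ →ₗ[ℂ] _)
      = -(LinearMap.trace ℂ (EuclideanSpace ℂ (Fin n))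
          (X : _ →ₗ[ℂ] _)) := by
    rw [ContinuousLinearMap.coe_neg, map_neg]
  calc ((∑' i : ι, ‖pd P z (σ i)‖ ^ 2 : ℝ) : ℂ)
      = ∑' i : ι, ((‖pd P z (σ i)‖ ^ 2 : ℝ) : ℂ) := Complex.ofRealCLM.map_tsum SR
    _ = ∑' i : ι, ∑ k,
        ⟪F z (ContinuousLinearMap.adjoint m ((EuclideanSpace.basisFun (Fin n) ℂ) k)), σ i⟫
          * ⟪σ i, F z ((EuclideanSpace.basisFun (Fin n) ℂ) k)⟫ := tsum_congr key1
    _ = ∑ k, ∑' i : ι,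
        ⟪F z (ContinuousLinearMap.adjoint m ((EuclideanSpace.basisFun (Fin n) ℂ) k)), σ i⟫
          * ⟪σ i, F z ((EuclideanSpace.basisFun (Fin n) ℂ) k)⟫ := Summable.tsum_finsetSum (fun k _ => S1 k)
    _ = ∑ k, ⟪F z (ContinuousLinearMap.adjoint m ((EuclideanSpace.basisFun (Fin n) ℂ) k)),
          F z ((EuclideanSpace.basisFun (Fin n) ℂ) k)⟫ :=
        Finset.sum_congr rfl (fun k _ => σ.tsum_inner_mul_inner _ _)
    _ = ∑ k, (X ((EuclideanSpace.basisFun (Fin n) ℂ) k)) k :=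
        Finset.sum_congr rfl (fun k _ => step k)
    _ = LinearMap.trace ℂ (EuclideanSpace ℂ (Fin n)) (X : _ →ₗ[ℂ] _) :=
        (trace_eq_sum_basis X).symm
    _ = -(LinearMap.trace ℂ (EuclideanSpace ℂ (Fin n)) (KP z : _ →ₗ[ℂ] _)) := by
        rw [KPz, tneg, neg_neg]

end Main
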